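/- For a > 0, b > 0 and any real ν, ∫₀^∞ x^{ν-1} e^{-ax - b/x} dx = 2 (b/a)^{ν/2} K_ν(2√(ab)), where K_ν is the modified Bessel function of the second kind. -/

import Mathlib

open MeasureTheory Set Real

/-- The modified Bessel function of the second kind (Macdonald function), via its
standard integral representation `K_ν(x) = ∫₀^∞ e^(-x cosh t) cosh(ν t) dt`. -/
noncomputable def besselK (ν x : ℝ) : ℝ :=
  ∫ t in Ioi (0 : ℝ), Real.exp (-x * Real.cosh t) * Real.cosh (ν * t)

lemma sq_div_eight_le_cosh (t : ℝ) : t ^ 2 / 8 ≤ Real.cosh t := by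
  rw [← Real.cosh_abs, Real.cosh_eq]
  have h1 : 1 + |t| / 2 ≤ Real.exp (|t| / 2) := by
    have := Real.add_one_le_exp (|t| / 2); linarith
  have h2 : Real.exp |t| = Real.exp (|t| / 2) ^ 2 := by
    rw [sq, ← Real.exp_add]; ring_nf
  have h3 : 0 < Real.exp (-|t|) := Real.exp_pos _
  have h4 : t ^ 2 = |t| ^ 2 := (sq_abs t).symm
  nlinarith [abs_nonneg t]

lemma integrable_exp_sub_cosh (ν s : ℝ) (hs : 0 < s) :
    Integrable (fun t : ℝ => Real.exp (ν * t - s * Real.cosh t)) := by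
  have hc : 0 < s / 8 := by linarith
  have hg : Integrable (fun t : ℝ => Real.exp (ν * t - s / 8 * t ^ 2)) := by
    have h := (integrable_exp_neg_mul_sq hc).comp_sub_right (ν / (2 * (s / 8)))
    have h2 := h.const_mul (Real.exp (ν ^ 2 / (4 * (s / 8))))
    refine h2.congr ?_
    filter_upwards with t
    rw [← Real.exp_add]
    congr 1
    field_simp
    ring
  refine hg.mono' ?_ ?_
  · exact (Real.continuous_exp.comp (by continuity)).aestronglyMeasurable
  · filter_upwards with t
    rw [Real.norm_eq_abs, abs_of_pos (Real.exp_pos _), Real.exp_le_exp]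
    have := sq_div_eight_le_cosh t
    nlinarith

/-- For `a, b > 0` and any real `ν`,
`∫₀^∞ x^(ν-1) e^(-a x - b/x) dx = 2 (b/a)^(ν/2) K_ν(2√(ab))`. -/
theorem integral_rpow_exp_bilateral (a b ν : ℝ) (ha : 0 < a) (hb : 0 < b) :
    ∫ x in Ioi (0 : ℝ), x ^ (ν - 1) * Real.exp (-a * x - b / x)
      = 2 * (b / a) ^ (ν / 2) * besselK ν (2 * Real.sqrt (a * b)) := by
  set c : ℝ := Real.sqrt (b / a) with hc_def
  set s : ℝ := 2 * Real.sqrt (a * b) with hs_def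
  have hba : 0 < b / a := div_pos hb ha
  have hc : 0 < c := Real.sqrt_pos.mpr hba
  have hab : 0 < Real.sqrt (a * b) := Real.sqrt_pos.mpr (mul_pos ha hb)
  have hs : 0 < s := by positivity
  have hac : a * c = Real.sqrt (a * b) := by
    rw [hc_def, ← Real.sqrt_sq ha.le, ← Real.sqrt_mul (sq_nonneg a)]
    congr 1
    field_simp
    ring_nf; rw [Real.sq_sqrt (sq_nonneg a)]
  have hcab : c * Real.sqrt (a * b) = b := by
    rw [hc_def, ← Real.sqrt_mul hba.le,
      show b / a * (a * b) = b ^ 2 by field_simp, Real.sqrt_sq hb.le]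
  have hbc : b / c = Real.sqrt (a * b) := by
    rw [div_eq_iff hc.ne']; linear_combination -hcab
  -- change of variables x = c * exp t
  have key : (∫ x in Ioi (0 : ℝ), x ^ (ν - 1) * Real.exp (-a * x - b / x))
      = ∫ t : ℝ, c ^ ν * Real.exp (ν * t - s * Real.cosh t) := by
    have hderiv : ∀ t ∈ (univ : Set ℝ), HasDerivWithinAt (fun t => c * Real.exp t)
        (c * Real.exp t) univ t := fun t _ =>
      ((Real.hasDerivAt_exp t).const_mul c).hasDerivWithinAt
    have hinj : InjOn (fun t => c * Real.exp t) univ := fun x _ y _ h => by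
      simp only at h
      exact Real.exp_injective (mul_left_cancel₀ hc.ne' h)
    have himg : (fun t => c * Real.exp t) '' univ = Ioi (0 : ℝ) := by
      ext x
      simp only [image_univ, mem_range, mem_Ioi]
      constructor
      · rintro ⟨t, rfl⟩; positivity
      · intro hx
        exact ⟨Real.log (x / c), by
          rw [Real.exp_log (by positivity)]; field_simp⟩
    have := integral_image_eq_integral_abs_deriv_smul (MeasurableSet.univ)
      hderiv hinj (fun x => x ^ (ν - 1) * Real.exp (-a * x - b / x))
    rw [himg] at this
    rw [this, Measure.restrict_univ]
    congr 1
    funext t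
    have hct : 0 < c * Real.exp t := by positivity
    rw [abs_of_pos hct, smul_eq_mul]
    have h1 : (c * Real.exp t) ^ (ν - 1) * (c * Real.exp t) = (c * Real.exp t) ^ ν := by
      nth_rewrite 2 [show c * Real.exp t = (c * Real.exp t) ^ (1 : ℝ) by
        rw [Real.rpow_one]]
      rw [← Real.rpow_add hct]
      ring_nf
    have h2 : (c * Real.exp t) ^ ν = c ^ ν * Real.exp (ν * t) := by
      rw [Real.mul_rpow hc.le (Real.exp_pos t).le, ← Real.exp_mul, mul_comm t ν]
    have e1 : a * (c * Real.exp t) = Real.sqrt (a * b) * Real.exp t := by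
      rw [← hac]; ring
    have e2 : b / (c * Real.exp t) = Real.sqrt (a * b) * Real.exp (-t) := by
      rw [div_mul_eq_div_div, hbc, Real.exp_neg, div_eq_mul_inv]
    have h3 : -a * (c * Real.exp t) - b / (c * Real.exp t) = -(s * Real.cosh t) := by
      rw [Real.cosh_eq, hs_def]
      linear_combination (-1 : ℝ) * e1 - e2
    calc (c * Real.exp t) * ((c * Real.exp t) ^ (ν - 1) *
            Real.exp (-a * (c * Real.exp t) - b / (c * Real.exp t)))
        = (c * Real.exp t) ^ (ν - 1) * (c * Real.exp t) *
            Real.exp (-a * (c * Real.exp t) - b / (c * Real.exp t)) := by ring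
      _ = c ^ ν * Real.exp (ν * t) * Real.exp (-(s * Real.cosh t)) := by
          rw [h1, h2, h3]
      _ = c ^ ν * Real.exp (ν * t - s * Real.cosh t) := by
          rw [mul_assoc, ← Real.exp_add]; ring_nf
  rw [key, integral_const_mul]
  -- split ℝ into Ioi 0 and Iic 0
  have hint := integrable_exp_sub_cosh ν s hs
  have hsplit : (∫ t : ℝ, Real.exp (ν * t - s * Real.cosh t))
      = ∫ t in Ioi (0:ℝ), (Real.exp (ν * t - s * Real.cosh t)
          + Real.exp (ν * (-t) - s * Real.cosh (-t))) := by
    rw [integral_add hint.integrableOn ((hint.comp_neg).integrableOn)]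
    have hneg : (∫ t in Ioi (0:ℝ), Real.exp (ν * (-t) - s * Real.cosh (-t)))
        = ∫ t in Iic (0:ℝ), Real.exp (ν * t - s * Real.cosh t) := by
      simpa using integral_comp_neg_Ioi 0 (fun t => Real.exp (ν * t - s * Real.cosh t))
    rw [hneg, add_comm, intervalIntegral.integral_Iic_add_Ioi hint.integrableOn hint.integrableOn]
  rw [hsplit]
  have heq : ∀ t ∈ Ioi (0:ℝ), Real.exp (ν * t - s * Real.cosh t)
      + Real.exp (ν * (-t) - s * Real.cosh (-t))
      = 2 * (Real.exp (-s * Real.cosh t) * Real.cosh (ν * t)) := by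
    intro t _
    rw [Real.cosh_neg, Real.cosh_eq (ν * t), mul_neg,
        show ν * t - s * Real.cosh t = -s * Real.cosh t + ν * t by ring,
        show -(ν * t) - s * Real.cosh t = -s * Real.cosh t + -(ν * t) by ring,
        Real.exp_add, Real.exp_add]
    ring
  rw [setIntegral_congr_fun measurableSet_Ioi heq, integral_const_mul]
  have hcnu : c ^ ν = (b / a) ^ (ν / 2) := by
    rw [hc_def, Real.sqrt_eq_rpow, ← Real.rpow_mul hba.le,
      show (1 / 2 : ℝ) * ν = ν / 2 by ring]
  rw [besselK, hcnu]
  ring
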